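/- The ODE ξ F₀'(ξ) = F₀(1 + 3F₀ + 3F₀²) with F₀ analytic at 0 and F₀'(0) = 1 has the implicit solution ξ = ξ₀ F₀ (F₀ + ω₀)^{-θ} (F₀ + \bar{ω₀})^{-\bar{θ}}, where ω₀ = 1/2 + i√3/6, θ = 1/2 + i√3/2, ξ₀ = 3^{-1/2} exp(−π√3/6). That is, any analytic function F₀ near 0 with F₀(ξ) = ξ + O(ξ²) solving this equation satisfies this algebraic relation where both sides are analytic. -/

import Mathlib

open Metric

noncomputable def w0 : ℂ := 1/2 + Complex.I * ((Real.sqrt 3 / 6 : ℝ) : ℂ)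
noncomputable def th0 : ℂ := 1/2 + Complex.I * ((Real.sqrt 3 / 2 : ℝ) : ℂ)

lemma hs3 : ((Real.sqrt 3 : ℝ) : ℂ)^2 = 3 := by
  rw [← Complex.ofReal_pow, Real.sq_sqrt (by norm_num : (3:ℝ) ≥ 0 ).le]; norm_num

lemma hconj_w : (starRingEnd ℂ) w0 = 1 - w0 := by
  unfold w0
  simp [map_add, map_mul, Complex.conj_I, Complex.conj_ofReal, map_div₀, map_ofNat]
  ring

lemma hconj_th : (starRingEnd ℂ) th0 = 1 - th0 := by
  unfold th0
  simp [map_add, map_mul, Complex.conj_I, Complex.conj_ofReal, map_div₀, map_ofNat]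
  ring

lemma hww : w0 * (starRingEnd ℂ) w0 = 1/3 := by
  rw [hconj_w]; unfold w0
  have := hs3
  have hI := Complex.I_sq
  push_cast
  linear_combination (1/36:ℂ) * this - (((Real.sqrt 3:ℝ):ℂ)^2/36) * hI

lemma hmix : th0 * (starRingEnd ℂ) w0 + (starRingEnd ℂ) th0 * w0 = 1 := by
  rw [hconj_w, hconj_th]; unfold w0 th0
  have := hs3
  have hI := Complex.I_sq
  push_cast
  linear_combination (1/6:ℂ) * this - (((Real.sqrt 3:ℝ):ℂ)^2/6) * hI

lemma hw_sum : w0 + (starRingEnd ℂ) w0 = 1 := by rw [hconj_w]; ring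
lemma hth_sum : th0 + (starRingEnd ℂ) th0 = 1 := by rw [hconj_th]; ring

lemma key' (f : ℂ) :
    f*(1+3*f+3*f^2)*(f+w0)*(f+(starRingEnd ℂ) w0)
      - th0*f^2*(1+3*f+3*f^2)*(f+(starRingEnd ℂ) w0)
      - ((starRingEnd ℂ) th0)*f^2*(1+3*f+3*f^2)*(f+w0)
    = f*(f+w0)*(f+(starRingEnd ℂ) w0) := by
  linear_combination (f*(1+3*f+3*f^2)-f)*f*hw_sum + (f*(1+3*f+3*f^2)-f)*hww
    - f^2*(1+3*f+3*f^2)*f*hth_sum - f^2*(1+3*f+3*f^2)*hmix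

lemma hw_re : w0.re = 1/2 := by unfold w0; simp
lemma hw_im : w0.im = Real.sqrt 3 / 6 := by unfold w0; simp

lemma hw_ne : w0 ≠ 0 := by
  intro h
  have := congrArg Complex.re h
  rw [hw_re] at this; norm_num at this

lemma hw_slit : w0 ∈ Complex.slitPlane := by
  rw [Complex.mem_slitPlane_iff, hw_re]; norm_num

lemma hw_conj_slit : (starRingEnd ℂ) w0 ∈ Complex.slitPlane := by
  rw [Complex.mem_slitPlane_iff, Complex.conj_re, hw_re]; norm_num

lemma habs_w : ‖w0‖ = (Real.sqrt 3)⁻¹ := by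
  have h : Complex.normSq w0 = 3⁻¹ := by
    rw [Complex.normSq_apply, hw_re, hw_im]
    have : Real.sqrt 3 ^ 2 = 3 := Real.sq_sqrt (by norm_num)
    nlinarith [this]
  rw [Complex.norm_def, h, Real.sqrt_inv]

lemma harg_w : w0.arg = Real.pi / 6 := by
  rw [Complex.arg_of_re_nonneg (by rw [hw_re]; norm_num), hw_im, habs_w]
  have hs : Real.sqrt 3 * Real.sqrt 3 = 3 := Real.mul_self_sqrt (by norm_num)
  have h12 : Real.sqrt 3 / 6 / (Real.sqrt 3)⁻¹ = 1/2 := by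
    field_simp
    nlinarith [hs]
  rw [h12, ← Real.sin_pi_div_six]
  exact Real.arcsin_sin (by linarith [Real.pi_pos]) (by linarith [Real.pi_pos])

lemma hlog_w : Complex.log w0 = ((-(Real.log 3)/2 : ℝ) : ℂ) + ((Real.pi/6 : ℝ) : ℂ) * Complex.I := by
  apply Complex.ext
  · simp only [Complex.add_re, Complex.ofReal_re, Complex.mul_re, Complex.I_re, Complex.I_im,
      Complex.ofReal_im, Complex.log_re, mul_zero, zero_mul, sub_zero, mul_one]
    rw [habs_w, Real.log_inv, Real.log_sqrt (by norm_num : (0:ℝ) ≤ 3)]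
    ring
  · simp only [Complex.add_im, Complex.ofReal_im, Complex.mul_im, Complex.I_im, Complex.I_re,
      Complex.ofReal_re, Complex.log_im, zero_mul, mul_one, zero_add, mul_zero, add_zero]
    rw [harg_w]

lemma th0_eq : th0 = ((1/2 : ℝ) : ℂ) + Complex.I * ((Real.sqrt 3 / 2 : ℝ) : ℂ) := by
  unfold th0; push_cast; ring

lemma h2re : (-th0 * Complex.log w0).re = Real.log 3/4 + Real.sqrt 3 * Real.pi/12 := by
  rw [hlog_w, th0_eq]
  simp only [Complex.neg_re, Complex.neg_im, Complex.mul_re, Complex.mul_im, Complex.add_re,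
    Complex.add_im, Complex.I_re, Complex.I_im, Complex.ofReal_re, Complex.ofReal_im]
  ring

lemma hC : (((Real.sqrt 3)⁻¹ : ℝ) : ℂ)
    * Complex.exp (-(((Real.pi * Real.sqrt 3 / 6 : ℝ)) : ℂ))
    * w0 ^ (-th0) * ((starRingEnd ℂ) w0) ^ (-(starRingEnd ℂ) th0) = 1 := by
  have harg : w0.arg ≠ Real.pi := by
    rw [harg_w]; intro h; have := Real.pi_pos; linarith
  have hcc : ((starRingEnd ℂ) w0) ^ (-(starRingEnd ℂ) th0)
      = (starRingEnd ℂ) (w0 ^ (-th0)) := by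
    rw [Complex.conj_cpow _ _ harg]
    congr 1
    congr 1
    simp
  rw [hcc, Complex.cpow_def_of_ne_zero hw_ne, ← Complex.exp_conj]
  have hsum : (Complex.log w0 * -th0) + (starRingEnd ℂ) (Complex.log w0 * -th0)
      = ((Real.log 3/2 + Real.sqrt 3 * Real.pi/6 : ℝ) : ℂ) := by
    rw [Complex.add_conj, mul_comm (Complex.log w0), h2re]
    push_cast; ring
  have hmain : (((Real.sqrt 3)⁻¹ : ℝ) : ℂ)
      * Complex.exp (-(((Real.pi * Real.sqrt 3 / 6 : ℝ)) : ℂ))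
      * Complex.exp (Complex.log w0 * -th0)
      * Complex.exp ((starRingEnd ℂ) (Complex.log w0 * -th0))
      = (((Real.sqrt 3)⁻¹ : ℝ) : ℂ)
        * Complex.exp (-(((Real.pi * Real.sqrt 3 / 6 : ℝ)) : ℂ)
            + ((Complex.log w0 * -th0) + (starRingEnd ℂ) (Complex.log w0 * -th0))) := by
    rw [Complex.exp_add, Complex.exp_add]; ring
  rw [hmain, hsum]
  have : -(((Real.pi * Real.sqrt 3 / 6 : ℝ)) : ℂ)
        + ((Real.log 3/2 + Real.sqrt 3 * Real.pi/6 : ℝ) : ℂ)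
      = ((Real.log 3 / 2 : ℝ) : ℂ) := by push_cast; ring
  rw [this]
  have hexp : Complex.exp ((Real.log 3 / 2 : ℝ) : ℂ) = ((Real.sqrt 3 : ℝ) : ℂ) := by
    rw [← Complex.ofReal_exp]
    congr 1
    rw [← Real.log_sqrt (by norm_num : (0:ℝ) ≤ 3)]
    exact Real.exp_log (Real.sqrt_pos.mpr (by norm_num))
  rw [hexp, ← Complex.ofReal_mul]
  rw [inv_mul_cancel₀ (by positivity : Real.sqrt 3 ≠ 0)]
  simp

lemma aux_eventually_eq_zero_of_iteratedDeriv {k : ℂ → ℂ} (hk : AnalyticAt ℂ k 0)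
    (h : ∀ n, iteratedDeriv n k 0 = 0) : ∀ᶠ z in nhds (0:ℂ), k z = 0 := by
  obtain ⟨p, hp⟩ := hk
  obtain ⟨r, hpr⟩ := hp
  have hr : EMetric.ball (0:ℂ) r ∈ nhds (0:ℂ) := EMetric.ball_mem_nhds _ hpr.r_pos
  filter_upwards [hr] with y hy
  have hs := hpr.hasSum_iteratedFDeriv (y := y) (by simpa [edist_zero_right] using Metric.mem_eball.mp hy)
  have hz : ∀ n : ℕ, (n.factorial : ℂ)⁻¹ • iteratedFDeriv ℂ n k 0 (fun _ => y) = 0 := by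
    intro n
    have e1 : (fun _ : Fin n => y) = (fun _ : Fin n => y • (1:ℂ)) := by
      funext i; simp
    have e2 : iteratedFDeriv ℂ n k 0 (fun _ => y)
        = (∏ _i : Fin n, y) • iteratedFDeriv ℂ n k 0 (fun _ => (1:ℂ)) := by
      rw [e1, ContinuousMultilinearMap.map_smul_univ]; simp
    have e3 : iteratedFDeriv ℂ n k 0 (fun _ => (1:ℂ)) = iteratedDeriv n k 0 := by
      rw [iteratedDeriv_eq_iteratedFDeriv]
    rw [e2, e3, h n, smul_zero, smul_zero]
  have : HasSum (fun n : ℕ => (n.factorial : ℂ)⁻¹ • iteratedFDeriv ℂ n k 0 (fun _ => y)) 0 := by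
    simp only [hz]; exact hasSum_zero
  have := hs.unique this
  simpa using this

lemma aux_iter {k : ℂ → ℂ} {U : Set ℂ} (hUo : IsOpen U)
    (hA : AnalyticOnNhd ℂ k U) (hode : ∀ ξ ∈ U, ξ * deriv k ξ = k ξ) :
    ∀ n : ℕ, ∀ ξ ∈ U, ξ * iteratedDeriv (n+1) k ξ = (1 - (n:ℂ)) * iteratedDeriv n k ξ := by
  have hAn : ∀ n : ℕ, AnalyticOnNhd ℂ (iteratedDeriv n k) U := by
    intro n; rw [iteratedDeriv_eq_iterate]; exact hA.iterated_deriv n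
  intro n
  induction n with
  | zero =>
    intro ξ hξ
    simpa [iteratedDeriv_one, iteratedDeriv_zero] using hode ξ hξ
  | succ n ih =>
    intro ξ hξ
    have hd1 : HasDerivAt (iteratedDeriv (n+1) k) (iteratedDeriv (n+2) k ξ) ξ := by
      have := ((hAn (n+1)) ξ hξ).differentiableAt.hasDerivAt
      rw [← iteratedDeriv_succ] at this
      exact this
    have hd0 : HasDerivAt (iteratedDeriv n k) (iteratedDeriv (n+1) k ξ) ξ := by
      have := ((hAn n) ξ hξ).differentiableAt.hasDerivAt
      rw [← iteratedDeriv_succ] at this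
      exact this
    have hL : HasDerivAt (fun ξ => ξ * iteratedDeriv (n+1) k ξ)
        (iteratedDeriv (n+1) k ξ + ξ * iteratedDeriv (n+2) k ξ) ξ := by
      simpa using (hasDerivAt_id' (x := ξ)).fun_mul hd1
    have hR : HasDerivAt (fun ξ => (1 - (n:ℂ)) * iteratedDeriv n k ξ)
        ((1 - (n:ℂ)) * iteratedDeriv (n+1) k ξ) ξ := hd0.const_mul _
    have heq : (fun ξ => ξ * iteratedDeriv (n+1) k ξ)
        =ᶠ[nhds ξ] (fun ξ => (1 - (n:ℂ)) * iteratedDeriv n k ξ) := by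
      filter_upwards [hUo.mem_nhds hξ] with z hz using ih z hz
    have hL' : HasDerivAt (fun ξ => (1 - (n:ℂ)) * iteratedDeriv n k ξ)
        (iteratedDeriv (n+1) k ξ + ξ * iteratedDeriv (n+2) k ξ) ξ :=
      hL.congr_of_eventuallyEq heq.symm
    have := hL'.unique hR
    push_cast
    linear_combination this

noncomputable def Phi0 (F₀ : ℂ → ℂ) (ξ : ℂ) : ℂ :=
  (((Real.sqrt 3)⁻¹ : ℝ) : ℂ) * Complex.exp (-(((Real.pi * Real.sqrt 3 / 6 : ℝ)) : ℂ))
    * F₀ ξ * (F₀ ξ + w0) ^ (-th0)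
    * (F₀ ξ + (starRingEnd ℂ) w0) ^ (-(starRingEnd ℂ) th0)

/-- Implicit solution of `ξ F₀' = F₀(1 + 3F₀ + 3F₀²)` with `F₀(ξ) = ξ + O(ξ²)`.
Complex powers are principal-branch `cpow`s (valid near `F₀ = 0` since `F₀ + ω₀` is near
`ω₀`, away from the branch cut). -/
theorem stmt_9 (F₀ : ℂ → ℂ) (r : ℝ) (hr : 0 < r)
    (hA : AnalyticOnNhd ℂ F₀ (Metric.ball (0:ℂ) r))
    (h0 : F₀ 0 = 0) (h1 : deriv F₀ 0 = 1)
    (hode : ∀ ξ ∈ Metric.ball (0:ℂ) r,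
      ξ * deriv F₀ ξ = F₀ ξ * (1 + 3 * F₀ ξ + 3 * (F₀ ξ) ^ 2)) :
    ∃ r' : ℝ, 0 < r' ∧ ∀ ξ ∈ Metric.ball (0:ℂ) r',
      ξ = (((Real.sqrt 3)⁻¹ : ℝ) : ℂ) * Complex.exp (-(((Real.pi * Real.sqrt 3 / 6 : ℝ)) : ℂ))
            * F₀ ξ
            * (F₀ ξ + ((1/2 : ℂ) + Complex.I * ((Real.sqrt 3 / 6 : ℝ) : ℂ)))
                ^ (-((1/2 : ℂ) + Complex.I * ((Real.sqrt 3 / 2 : ℝ) : ℂ)))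
            * (F₀ ξ + (starRingEnd ℂ) ((1/2 : ℂ) + Complex.I * ((Real.sqrt 3 / 6 : ℝ) : ℂ)))
                ^ (-(starRingEnd ℂ) ((1/2 : ℂ) + Complex.I * ((Real.sqrt 3 / 2 : ℝ) : ℂ))) := by
  classical
  set C : ℂ := (((Real.sqrt 3)⁻¹ : ℝ) : ℂ)
      * Complex.exp (-(((Real.pi * Real.sqrt 3 / 6 : ℝ)) : ℂ)) with hC_def
  set U : Set ℂ := {ξ | ξ ∈ Metric.ball (0:ℂ) r ∧ F₀ ξ + w0 ∈ Complex.slitPlane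
      ∧ F₀ ξ + (starRingEnd ℂ) w0 ∈ Complex.slitPlane} with hU_def
  have hUo : IsOpen U := by
    rw [isOpen_iff_mem_nhds]
    intro ξ hξ
    obtain ⟨hb, hs1, hs2⟩ := hξ
    have hFc : ContinuousAt F₀ ξ := (hA ξ hb).continuousAt
    have e1 : ∀ᶠ z in nhds ξ, z ∈ Metric.ball (0:ℂ) r := isOpen_ball.eventually_mem hb
    have e2 : ∀ᶠ z in nhds ξ, F₀ z + w0 ∈ Complex.slitPlane :=
      (hFc.add continuousAt_const).eventually_mem (Complex.isOpen_slitPlane.mem_nhds hs1)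
    have e3 : ∀ᶠ z in nhds ξ, F₀ z + (starRingEnd ℂ) w0 ∈ Complex.slitPlane :=
      (hFc.add continuousAt_const).eventually_mem (Complex.isOpen_slitPlane.mem_nhds hs2)
    filter_upwards [e1, e2, e3] with z h1 h2 h3
    exact ⟨h1, h2, h3⟩
  have h0U : (0:ℂ) ∈ U := by
    refine ⟨Metric.mem_ball_self hr, ?_, ?_⟩
    · rw [h0, zero_add]; exact hw_slit
    · rw [h0, zero_add]; exact hw_conj_slit
  -- the main ODE computation for Phi0
  have hPhiDeriv : ∀ ξ ∈ U, HasDerivAt (Phi0 F₀)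
      (((C * deriv F₀ ξ) * (F₀ ξ + w0) ^ (-th0)
          + (C * F₀ ξ) * (-th0 * (F₀ ξ + w0) ^ (-th0 - 1) * deriv F₀ ξ))
        * (F₀ ξ + (starRingEnd ℂ) w0) ^ (-(starRingEnd ℂ) th0)
        + (C * F₀ ξ * (F₀ ξ + w0) ^ (-th0))
          * (-(starRingEnd ℂ) th0 * (F₀ ξ + (starRingEnd ℂ) w0) ^ (-(starRingEnd ℂ) th0 - 1)
              * deriv F₀ ξ)) ξ := by
    intro ξ hξ
    obtain ⟨hb, hs1, hs2⟩ := hξ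
    have hF : HasDerivAt F₀ (deriv F₀ ξ) ξ := (hA ξ hb).differentiableAt.hasDerivAt
    have hA' : HasDerivAt (fun z => (F₀ z + w0) ^ (-th0))
        (-th0 * (F₀ ξ + w0) ^ (-th0 - 1) * deriv F₀ ξ) ξ :=
      (hF.add_const w0).cpow_const hs1
    have hB' : HasDerivAt (fun z => (F₀ z + (starRingEnd ℂ) w0) ^ (-(starRingEnd ℂ) th0))
        (-(starRingEnd ℂ) th0 * (F₀ ξ + (starRingEnd ℂ) w0) ^ (-(starRingEnd ℂ) th0 - 1)
          * deriv F₀ ξ) ξ :=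
      (hF.add_const _).cpow_const hs2
    have h1' : HasDerivAt (fun z => C * F₀ z) (C * deriv F₀ ξ) ξ := hF.const_mul C
    exact (h1'.mul hA').mul hB'
  have hodePhi : ∀ ξ ∈ U, ξ * deriv (Phi0 F₀) ξ = Phi0 F₀ ξ := by
    intro ξ hξ
    obtain ⟨hb, hs1, hs2⟩ := hξ
    have hd := (hPhiDeriv ξ ⟨hb, hs1, hs2⟩).deriv
    rw [hd]
    have hane : F₀ ξ + w0 ≠ 0 := Complex.slitPlane_ne_zero hs1
    have hbne : F₀ ξ + (starRingEnd ℂ) w0 ≠ 0 := Complex.slitPlane_ne_zero hs2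
    have r1 : (F₀ ξ + w0) * (F₀ ξ + w0) ^ (-th0 - 1) = (F₀ ξ + w0) ^ (-th0) := by
      have h := Complex.cpow_add (-th0 - 1) 1 hane
      rw [Complex.cpow_one] at h
      calc (F₀ ξ + w0) * (F₀ ξ + w0) ^ (-th0 - 1)
          = (F₀ ξ + w0) ^ (-th0 - 1) * (F₀ ξ + w0) := mul_comm _ _
        _ = (F₀ ξ + w0) ^ (-th0 - 1 + 1) := h.symm
        _ = (F₀ ξ + w0) ^ (-th0) := by rw [show (-th0 - 1 + 1 : ℂ) = -th0 by ring]
    have r2 : (F₀ ξ + (starRingEnd ℂ) w0)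
          * (F₀ ξ + (starRingEnd ℂ) w0) ^ (-(starRingEnd ℂ) th0 - 1)
        = (F₀ ξ + (starRingEnd ℂ) w0) ^ (-(starRingEnd ℂ) th0) := by
      have h := Complex.cpow_add (-(starRingEnd ℂ) th0 - 1) 1 hbne
      rw [Complex.cpow_one] at h
      calc (F₀ ξ + (starRingEnd ℂ) w0)
            * (F₀ ξ + (starRingEnd ℂ) w0) ^ (-(starRingEnd ℂ) th0 - 1)
          = (F₀ ξ + (starRingEnd ℂ) w0) ^ (-(starRingEnd ℂ) th0 - 1)
              * (F₀ ξ + (starRingEnd ℂ) w0) := mul_comm _ _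
        _ = (F₀ ξ + (starRingEnd ℂ) w0) ^ (-(starRingEnd ℂ) th0 - 1 + 1) := h.symm
        _ = (F₀ ξ + (starRingEnd ℂ) w0) ^ (-(starRingEnd ℂ) th0) := by
            rw [show (-(starRingEnd ℂ) th0 - 1 + 1 : ℂ) = -(starRingEnd ℂ) th0 by ring]
    have hξd := hode ξ hb
    show ξ * _ = Phi0 F₀ ξ
    unfold Phi0
    rw [← hC_def, ← r1, ← r2]
    linear_combination (C * (F₀ ξ + w0) ^ (-th0 - 1)
        * (F₀ ξ + (starRingEnd ℂ) w0) ^ (-(starRingEnd ℂ) th0 - 1)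
        * ((F₀ ξ + w0)*(F₀ ξ + (starRingEnd ℂ) w0) - th0*(F₀ ξ)*(F₀ ξ + (starRingEnd ℂ) w0)
            - (starRingEnd ℂ) th0*(F₀ ξ)*(F₀ ξ + w0))) * hξd
      + (C * (F₀ ξ + w0) ^ (-th0 - 1)
          * (F₀ ξ + (starRingEnd ℂ) w0) ^ (-(starRingEnd ℂ) th0 - 1)) * key' (F₀ ξ)
  -- analyticity of Phi0 on U
  have hPhiA : AnalyticOnNhd ℂ (Phi0 F₀) U := by
    intro ξ hξ
    obtain ⟨hb, hs1, hs2⟩ := hξ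
    have hFa : AnalyticAt ℂ F₀ ξ := hA ξ hb
    have ha1 : AnalyticAt ℂ (fun z => (F₀ z + w0) ^ (-th0)) ξ :=
      (hFa.add analyticAt_const).cpow analyticAt_const hs1
    have ha2 : AnalyticAt ℂ
        (fun z => (F₀ z + (starRingEnd ℂ) w0) ^ (-(starRingEnd ℂ) th0)) ξ :=
      (hFa.add analyticAt_const).cpow analyticAt_const hs2
    exact (((analyticAt_const.mul hFa).mul ha1).mul ha2)
  -- the difference function
  set k : ℂ → ℂ := fun z => Phi0 F₀ z - z with hk_def
  have hkA : AnalyticOnNhd ℂ k U := fun ξ hξ => (hPhiA ξ hξ).sub analyticAt_id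
  have hodek : ∀ ξ ∈ U, ξ * deriv k ξ = k ξ := by
    intro ξ hξ
    have hdiff : DifferentiableAt ℂ (Phi0 F₀) ξ := (hPhiA ξ hξ).differentiableAt
    have : deriv k ξ = deriv (Phi0 F₀) ξ - 1 := by
      rw [hk_def]
      exact (hdiff.hasDerivAt.sub (hasDerivAt_id ξ)).deriv
    rw [this, hk_def]
    have := hodePhi ξ hξ
    ring_nf
    linear_combination this
  -- k(0) = 0
  have hk0 : k 0 = 0 := by
    rw [hk_def]
    simp [Phi0, h0]
  -- deriv k 0 = 0
  have hdk0 : deriv k 0 = 0 := by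
    have hdiff : DifferentiableAt ℂ (Phi0 F₀) 0 := (hPhiA 0 h0U).differentiableAt
    have h1' : deriv k 0 = deriv (Phi0 F₀) 0 - 1 := by
      rw [hk_def]
      exact (hdiff.hasDerivAt.sub (hasDerivAt_id 0)).deriv
    have hd := (hPhiDeriv 0 h0U).deriv
    have hCval : C * w0 ^ (-th0) * ((starRingEnd ℂ) w0) ^ (-(starRingEnd ℂ) th0) = 1 := by
      rw [hC_def]
      exact hC
    rw [h1', hd, h0, h1]
    simp only [zero_add, mul_zero, zero_mul, mul_one, add_zero]
    linear_combination hCval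
  -- all iterated derivatives of k vanish at 0
  have hiter := aux_iter hUo hkA hodek
  have hzero : ∀ n, iteratedDeriv n k 0 = 0 := by
    intro n
    match n with
    | 0 => simpa [iteratedDeriv_zero] using hk0
    | 1 => simpa [iteratedDeriv_one] using hdk0
    | (m+2) =>
      have := hiter (m+2) 0 h0U
      rw [zero_mul] at this
      have hc : (1 - ((m+2 : ℕ):ℂ)) ≠ 0 := by
        push_cast
        intro h
        have : ((m:ℂ)) = -1 := by linear_combination -h
        have := congrArg Complex.re this
        simp at this
        have : (0:ℝ) ≤ (m:ℝ) := Nat.cast_nonneg m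
        rw [‹(m:ℝ) = -1›] at this
        linarith
      exact (mul_eq_zero.mp this.symm).resolve_left hc
  -- conclude
  have hev : ∀ᶠ z in nhds (0:ℂ), k z = 0 :=
    aux_eventually_eq_zero_of_iteratedDeriv (hkA 0 h0U) hzero
  rw [Metric.eventually_nhds_iff] at hev
  obtain ⟨ε, hε, hball⟩ := hev
  refine ⟨ε, hε, ?_⟩
  intro ξ hξ
  have := hball (by simpa [Metric.mem_ball] using hξ)
  have h2 : Phi0 F₀ ξ - ξ = 0 := this
  have hPhi : Phi0 F₀ ξ = ξ := sub_eq_zero.mp h2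
  show ξ = Phi0 F₀ ξ
  exact hPhi.symm
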